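/- In the random process associated with countNFAcore*, for every state q of the unrolled automaton, every realizable history h for q, every admissible value t, every copy index r, and every word w ∈ L(q), the probability that w belongs to the random set Y^r_{h,t}(q) equals t. Moreover, if pred(q) = (q₁,...,q_k), then the probability that w belongs to Z^r_h(q) equals min(h(q₁),...,h(q_k)). -/

import Mathlib

/-- A nondeterministic finite automaton over the alphabet `{0,1}` (`Bool`), with a single
initial state, a transition relation, and (via `LinearOrder σ`) a total order `≺` on states. -/
structure UNFA (σ : Type*) where
  qI : σ
  trans : σ → Bool → σ → Prop

/-- `A.Accepts w q` : there is a run of the word `w` from the initial state ending at `q`.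
`L(q) = {w | A.Accepts w q}`. -/
inductive UNFA.Accepts {σ : Type*} (A : UNFA σ) : List Bool → σ → Prop
  | nil : A.Accepts [] A.qI
  | snoc {w : List Bool} {b : Bool} {q' q : σ} :
      A.Accepts w q' → A.trans q' b q → A.Accepts (w ++ [b]) q

/-- The `≺`-first `b`-predecessor of `q` whose language contains `w`
(junk value `qI` if there is none). -/
noncomputable def UNFA.firstPred {σ : Type*} [Fintype σ] [LinearOrder σ]
    (A : UNFA σ) (q : σ) (b : Bool) (w : List Bool) : σ := by
  classical
  exact if h : (Finset.univ.filter fun q' => A.trans q' b q ∧ A.Accepts w q').Nonempty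
    then (Finset.univ.filter fun q' => A.trans q' b q ∧ A.Accepts w q').min' h
    else A.qI

/-- Derivation run computed on the reversed word, listed from `q` back to the initial
state. -/
noncomputable def UNFA.derivRunRev {σ : Type*} [Fintype σ] [LinearOrder σ]
    (A : UNFA σ) : List Bool → σ → List σ
  | [], q => [q]
  | b :: rest, q => q :: A.derivRunRev rest (A.firstPred q b rest.reverse)

/-- The derivation run `run(w,q)` of `w ∈ L(q)`, as the list of its states from the
initial state (index 0) to `q` (index `w.length`). -/
noncomputable def UNFA.derivRun {σ : Type*} [Fintype σ] [LinearOrder σ]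
    (A : UNFA σ) (w : List Bool) (q : σ) : List σ :=
  (A.derivRunRev w.reverse q).reverse

/-- The index `ℓ` of the last common prefix state of two runs `R, R'` (state lists) with
label words `w, w'`: the largest `k ≤ |w|` such that the runs agree on their first `k+1`
states and the words agree on their first `k` symbols. -/
def lcpsLevel {σ : Type*} [DecidableEq σ] (R R' : List σ) (w w' : List Bool) : ℕ :=
  Nat.findGreatest
    (fun k => R.take (k+1) = R'.take (k+1) ∧ w.take k = w'.take k) w.length


/-- `ρ_h(q) = min(h(q₁),...,h(q_k))` over the predecessors of `q`
(junk value `1` if `q` has no predecessor). -/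
noncomputable def UNFA.rhoH {σ : Type*} [Fintype σ] [LinearOrder σ]
    (A : UNFA σ) (h : σ → ℚ) (q : σ) : ℚ := by
  classical
  exact if hne : ((Finset.univ.filter fun q' => ∃ b, A.trans q' b q).image h).Nonempty
    then ((Finset.univ.filter fun q' => ∃ b, A.trans q' b q).image h).min' hne
    else 1

set_option linter.unusedSectionVars false

section Aux
variable {σ : Type*} [Fintype σ] [LinearOrder σ]

lemma UNFA.accepts_nil_inv (A : UNFA σ) {v : List Bool} {q : σ}
    (hacc : A.Accepts v q) (hv : v = []) : q = A.qI := by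
  cases hacc with
  | nil => rfl
  | snoc h1 h2 => simp at hv

lemma UNFA.accepts_snoc_inv (A : UNFA σ) {v : List Bool} {q : σ}
    (hacc : A.Accepts v q) {w : List Bool} {b : Bool} (hv : v = w ++ [b]) :
    ∃ q', A.trans q' b q ∧ A.Accepts w q' := by
  cases hacc with
  | nil => simp at hv
  | @snoc w0 b0 q' q h1 h2 =>
      obtain ⟨hw, hb⟩ := List.append_inj' hv rfl
      subst hw
      simp at hb
      subst hb
      exact ⟨q', h2, h1⟩

lemma UNFA.firstPred_spec (A : UNFA σ) {w : List Bool} {b : Bool} {q : σ}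
    (hacc : A.Accepts (w ++ [b]) q) :
    A.trans (A.firstPred q b w) b q ∧ A.Accepts w (A.firstPred q b w) := by
  classical
  obtain ⟨q', ht, hw⟩ := A.accepts_snoc_inv hacc rfl
  rw [UNFA.firstPred]
  split
  · next hne =>
      have := Finset.min'_mem _ hne
      simpa using this
  · next hne =>
      exact absurd ⟨q', by simp [ht, hw]⟩ hne

lemma UNFA.rhoH_pos (A : UNFA σ) {h : σ → ℚ} (hpos : ∀ q', 0 < h q') (q : σ) :
    0 < A.rhoH h q := by
  classical
  rw [UNFA.rhoH]
  split
  · next hne =>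
      obtain ⟨q', -, hq'⟩ := Finset.mem_image.mp (Finset.min'_mem _ hne)
      rw [← hq']
      exact hpos q'
  · exact one_pos

lemma UNFA.rhoH_le (A : UNFA σ) (h : σ → ℚ) {p q : σ} {b : Bool}
    (ht : A.trans p b q) : A.rhoH h q ≤ h p := by
  classical
  have hmem : h p ∈ (Finset.univ.filter fun q' => ∃ b, A.trans q' b q).image h :=
    Finset.mem_image.mpr ⟨p, Finset.mem_filter.mpr ⟨Finset.mem_univ p, ⟨b, ht⟩⟩, rfl⟩
  rw [UNFA.rhoH]
  split
  · next hne => exact Finset.min'_le _ _ hmem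
  · next hne => exact absurd ⟨_, hmem⟩ hne

lemma UNFA.lvl_eq (A : UNFA σ) (lvl : σ → ℕ) (hlvl0 : lvl A.qI = 0)
    (hlvlstep : ∀ q' b q, A.trans q' b q → lvl q = lvl q' + 1)
    {w : List Bool} {q : σ} (hacc : A.Accepts w q) : lvl q = w.length := by
  induction hacc with
  | nil => simpa using hlvl0
  | snoc h1 h2 ih => rw [hlvlstep _ _ _ h2, ih]; simp

end Aux


/-- Membership event `w.reverse ∈ Y^r_{h,t}(q)` of the random process, driven by the
independent uniform coins `U (q, w, c)` (`c = false` for the coin of the `reduce` inside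
`Z`, `c = true` for the final `reduce` giving `Y`).  Defined by recursion on the reversed
word. -/
noncomputable def UNFA.memYrev {σ Ω : Type*} [Fintype σ] [LinearOrder σ]
    (A : UNFA σ) (U : σ × List Bool × Bool → Ω → ℝ) (h : σ → ℚ) :
    List Bool → σ → ℚ → Ω → Prop
  | [], q, _t, _ω => q = A.qI
  | b :: rest, q, t, ω =>
      A.memYrev U h rest (A.firstPred q b rest.reverse) (h (A.firstPred q b rest.reverse)) ω ∧
      A.Accepts (b :: rest).reverse q ∧
      U (q, (b :: rest).reverse, false) ω ≤
        ((A.rhoH h q : ℝ) / ((h (A.firstPred q b rest.reverse) : ℝ))) ∧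
      U (q, (b :: rest).reverse, true) ω ≤ ((t : ℝ) / (A.rhoH h q : ℝ))

/-- Membership event `w.reverse ∈ Z^r_h(q)` of the random process. -/
noncomputable def UNFA.memZrev {σ Ω : Type*} [Fintype σ] [LinearOrder σ]
    (A : UNFA σ) (U : σ × List Bool × Bool → Ω → ℝ) (h : σ → ℚ) :
    List Bool → σ → Ω → Prop
  | [], _q, _ω => False
  | b :: rest, q, ω =>
      A.memYrev U h rest (A.firstPred q b rest.reverse) (h (A.firstPred q b rest.reverse)) ω ∧
      A.Accepts (b :: rest).reverse q ∧
      U (q, (b :: rest).reverse, false) ω ≤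
        ((A.rhoH h q : ℝ) / ((h (A.firstPred q b rest.reverse) : ℝ)))

/-- `w ∈ Y^r_{h,t}(q)`. -/
noncomputable def UNFA.memY {σ Ω : Type*} [Fintype σ] [LinearOrder σ]
    (A : UNFA σ) (U : σ × List Bool × Bool → Ω → ℝ) (h : σ → ℚ)
    (w : List Bool) (q : σ) (t : ℚ) (ω : Ω) : Prop :=
  A.memYrev U h w.reverse q t ω

/-- `w ∈ Z^r_h(q)`. -/
noncomputable def UNFA.memZ {σ Ω : Type*} [Fintype σ] [LinearOrder σ]
    (A : UNFA σ) (U : σ × List Bool × Bool → Ω → ℝ) (h : σ → ℚ)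
    (w : List Bool) (q : σ) (ω : Ω) : Prop :=
  A.memZrev U h w.reverse q ω

open MeasureTheory ProbabilityTheory

lemma mset_const {Ω : Type*} [m : MeasurableSpace Ω] (p : Prop) :
    MeasurableSet[m] {ω : Ω | p} := by
  by_cases hp : p
  · have : {ω : Ω | p} = Set.univ := by ext ω; simp [hp]
    rw [this]; exact MeasurableSet.univ
  · have : {ω : Ω | p} = ∅ := by ext ω; simp [hp]
    rw [this]; exact MeasurableSet.empty

section Prob
variable {σ Ω : Type*} [Fintype σ] [LinearOrder σ] [MeasurableSpace Ω]

/-- The event `{ω | U i ω ≤ c}` is measurable w.r.t. the sub-σ-algebra generated by the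
coins indexed by any set `S` containing `i`. -/
lemma coin_mble (U : σ × List Bool × Bool → Ω → ℝ) {S : Set (σ × List Bool × Bool)}
    {i : σ × List Bool × Bool} (hi : i ∈ S) (c : ℝ) :
    MeasurableSet[⨆ j ∈ S, MeasurableSpace.comap (U j) inferInstance] {ω | U i ω ≤ c} := by
  have h1 : MeasurableSet[MeasurableSpace.comap (U i) inferInstance] {ω | U i ω ≤ c} :=
    ⟨Set.Iic c, measurableSet_Iic, rfl⟩
  exact le_iSup₂ (f := fun j (_ : j ∈ S) => MeasurableSpace.comap (U j) inferInstance) i hi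
    _ h1

lemma UNFA.memYrev_mble (A : UNFA σ) (U : σ × List Bool × Bool → Ω → ℝ) (h : σ → ℚ) :
    ∀ (v : List Bool) (q : σ) (t : ℚ),
      MeasurableSet[⨆ i ∈ {i : σ × List Bool × Bool | i.2.1.length ≤ v.length},
          MeasurableSpace.comap (U i) inferInstance] {ω | A.memYrev U h v q t ω} := by
  intro v
  induction v with
  | nil =>
      intro q t
      have : {ω : Ω | A.memYrev U h List.nil q t ω} = {ω : Ω | q = A.qI} := rfl
      rw [this]
      exact mset_const (m := _) _
  | cons b rest ih =>
      intro q t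
      have hmono : (⨆ i ∈ {i : σ × List Bool × Bool | i.2.1.length ≤ rest.length},
            MeasurableSpace.comap (U i) inferInstance) ≤
          ⨆ i ∈ {i : σ × List Bool × Bool | i.2.1.length ≤ (b :: rest).length},
            MeasurableSpace.comap (U i) inferInstance := by
        apply biSup_mono
        intro i hi
        simp only [Set.mem_setOf_eq, List.length_cons] at hi ⊢
        omega
      simp only [UNFA.memYrev, Set.setOf_and]
      refine MeasurableSet.inter (hmono _ (ih _ _)) (MeasurableSet.inter ?_
        (MeasurableSet.inter ?_ ?_))
      · exact mset_const (m := _) _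
      · exact coin_mble U (by simp) _
      · exact coin_mble U (by simp) _

lemma indep_split {μ : Measure Ω} (U : σ × List Bool × Bool → Ω → ℝ)
    (hUm : ∀ i, Measurable (U i))
    (hUindep : iIndepFun U μ)
    {S T : Set (σ × List Bool × Bool)} (hST : Disjoint S T) {E F : Set Ω}
    (hE : MeasurableSet[⨆ i ∈ S, MeasurableSpace.comap (U i) inferInstance] E)
    (hF : MeasurableSet[⨆ i ∈ T, MeasurableSpace.comap (U i) inferInstance] F) :
    μ (E ∩ F) = μ E * μ F := by
  have hIndep := ProbabilityTheory.indep_iSup_of_disjoint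
    (fun i => (hUm i).comap_le) hUindep.iIndep hST
  exact (ProbabilityTheory.Indep_iff _ _ _).mp hIndep E F hE hF

lemma keyY {μ : Measure Ω} [IsProbabilityMeasure μ] (A : UNFA σ)
    (lvl : σ → ℕ) (hlvl0 : lvl A.qI = 0)
    (hlvlstep : ∀ q' b q, A.trans q' b q → lvl q = lvl q' + 1)
    (U : σ × List Bool × Bool → Ω → ℝ)
    (hUm : ∀ i, Measurable (U i))
    (hUindep : iIndepFun U μ)
    (hUunif : ∀ i c, 0 ≤ c → c ≤ 1 → μ {ω | U i ω ≤ c} = ENNReal.ofReal c)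
    (h : σ → ℚ) (hpos : ∀ q', 0 < h q') (hI : h A.qI = 1)
    (hle : ∀ q', q' ≠ A.qI → h q' ≤ A.rhoH h q') :
    ∀ (v : List Bool) (q : σ) (t : ℚ), 0 < t → (v ≠ [] → t ≤ A.rhoH h q) →
      (q = A.qI → t = 1) → A.Accepts v.reverse q →
      μ {ω | A.memYrev U h v q t ω} = ENNReal.ofReal (t : ℝ) ∧
      (v ≠ [] → μ {ω | A.memZrev U h v q ω} = ENNReal.ofReal ((A.rhoH h q : ℝ))) := by
  intro v
  induction v with
  | nil =>
      intro q t ht0 htle htI hacc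
      have hq : q = A.qI := A.accepts_nil_inv hacc rfl
      have ht1 : t = 1 := htI hq
      refine ⟨?_, by simp⟩
      have : {ω : Ω | A.memYrev U h List.nil q t ω} = Set.univ := by
        ext ω; simp [UNFA.memYrev, hq]
      rw [this, measure_univ, ht1]
      norm_num
  | cons b rest ih =>
      intro q t ht0 htle htI hacc
      have hrev : (b :: rest).reverse = rest.reverse ++ [b] := by simp
      rw [hrev] at hacc
      obtain ⟨htrans, haccp⟩ := A.firstPred_spec hacc
      set p := A.firstPred q b rest.reverse with hpdef
      have hρq : 0 < A.rhoH h q := A.rhoH_pos hpos q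
      have hρle : A.rhoH h q ≤ h p := A.rhoH_le h htrans
      have hppos : 0 < h p := hpos p
      have htρ : t ≤ A.rhoH h q := htle (by simp)
      -- IH at p
      have hcond : rest ≠ [] → h p ≤ A.rhoH h p := by
        intro hne
        apply hle
        intro hpI
        have hl := A.lvl_eq lvl hlvl0 hlvlstep haccp
        rw [hpI, hlvl0] at hl
        simp only [List.length_reverse] at hl
        exact hne (List.length_eq_zero_iff.mp hl.symm)
      have haccp' : A.Accepts rest.reverse p := haccp
      have hIH := (ih p (h p) hppos hcond (fun hpI => by rw [hpI, hI]) haccp').1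
      -- coins
      set c1 : ℝ := (A.rhoH h q : ℝ) / ((h p : ℝ)) with hc1
      set c2 : ℝ := ((t : ℝ)) / (A.rhoH h q : ℝ) with hc2
      set i1 : σ × List Bool × Bool := (q, (b :: rest).reverse, false) with hi1
      set i2 : σ × List Bool × Bool := (q, (b :: rest).reverse, true) with hi2
      set E := {ω : Ω | A.memYrev U h rest p (h p) ω} with hE
      have hc1nn : 0 ≤ c1 := by positivity
      have hc1le : c1 ≤ 1 := by
        rw [hc1, div_le_one (by exact_mod_cast hppos)]
        exact_mod_cast hρle
      have hc2nn : 0 ≤ c2 := by positivity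
      have hc2le : c2 ≤ 1 := by
        rw [hc2, div_le_one (by exact_mod_cast hρq)]
        exact_mod_cast htρ
      have hEm : MeasurableSet[⨆ i ∈ {i : σ × List Bool × Bool | i.2.1.length ≤ rest.length},
          MeasurableSpace.comap (U i) inferInstance] E := A.memYrev_mble U h rest p (h p)
      have hd1 : Disjoint {i : σ × List Bool × Bool | i.2.1.length ≤ rest.length}
          ({i1} : Set (σ × List Bool × Bool)) := by
        rw [Set.disjoint_singleton_right]
        simp [hi1]
      have hd2 : Disjoint (insert i1 {i : σ × List Bool × Bool | i.2.1.length ≤ rest.length})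
          ({i2} : Set (σ × List Bool × Bool)) := by
        rw [Set.disjoint_singleton_right]
        simp [hi1, hi2]
      have step1 : μ (E ∩ {ω | U i1 ω ≤ c1}) = μ E * μ {ω | U i1 ω ≤ c1} :=
        indep_split U hUm hUindep hd1 hEm (coin_mble U (Set.mem_singleton _) c1)
      have hEC1m : MeasurableSet[⨆ i ∈ insert i1
            {i : σ × List Bool × Bool | i.2.1.length ≤ rest.length},
          MeasurableSpace.comap (U i) inferInstance] (E ∩ {ω | U i1 ω ≤ c1}) := by
        refine MeasurableSet.inter ?_ (coin_mble U (Set.mem_insert _ _) c1)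
        have hsub : (⨆ i ∈ {i : σ × List Bool × Bool | i.2.1.length ≤ rest.length},
              MeasurableSpace.comap (U i) inferInstance) ≤
            ⨆ i ∈ insert i1 {i : σ × List Bool × Bool | i.2.1.length ≤ rest.length},
              MeasurableSpace.comap (U i) inferInstance :=
          biSup_mono (fun i hi => Set.subset_insert _ _ hi)
        exact hsub _ hEm
      have step2 : μ ((E ∩ {ω | U i1 ω ≤ c1}) ∩ {ω | U i2 ω ≤ c2}) =
          μ (E ∩ {ω | U i1 ω ≤ c1}) * μ {ω | U i2 ω ≤ c2} :=
        indep_split U hUm hUindep hd2 hEC1m (coin_mble U (Set.mem_singleton _) c2)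
      have hμE : μ E = ENNReal.ofReal ((h p : ℝ)) := hIH
      have hμC1 : μ {ω | U i1 ω ≤ c1} = ENNReal.ofReal c1 := hUunif i1 c1 hc1nn hc1le
      have hμC2 : μ {ω | U i2 ω ≤ c2} = ENNReal.ofReal c2 := hUunif i2 c2 hc2nn hc2le
      constructor
      · have hsetY : {ω | A.memYrev U h (b :: rest) q t ω} =
            (E ∩ {ω | U i1 ω ≤ c1}) ∩ {ω | U i2 ω ≤ c2} := by
          ext ω
          simp only [UNFA.memYrev, Set.mem_inter_iff, Set.mem_setOf_eq, hE, ← hpdef,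
            ← hc1, ← hc2, ← hi1, ← hi2]
          constructor
          · rintro ⟨ha, -, hb, hc⟩; exact ⟨⟨ha, hb⟩, hc⟩
          · rintro ⟨⟨ha, hb⟩, hc⟩; exact ⟨ha, by rw [hrev]; exact hacc, hb, hc⟩
        rw [hsetY, step2, step1, hμE, hμC1, hμC2,
          ← ENNReal.ofReal_mul (by positivity), ← ENNReal.ofReal_mul (by positivity)]
        congr 1
        have hp0 : (h p : ℝ) ≠ 0 := by exact_mod_cast hppos.ne'
        have hρ0 : (A.rhoH h q : ℝ) ≠ 0 := by exact_mod_cast hρq.ne'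
        rw [hc1, hc2]; field_simp
      · intro _
        have hsetZ : {ω | A.memZrev U h (b :: rest) q ω} = E ∩ {ω | U i1 ω ≤ c1} := by
          ext ω
          simp only [UNFA.memZrev, Set.mem_inter_iff, Set.mem_setOf_eq, hE, ← hpdef,
            ← hc1, ← hi1]
          constructor
          · rintro ⟨ha, -, hb⟩; exact ⟨ha, hb⟩
          · rintro ⟨ha, hb⟩; exact ⟨ha, by rw [hrev]; exact hacc, hb⟩
        rw [hsetZ, step1, hμE, hμC1, ← ENNReal.ofReal_mul (by positivity)]
        congr 1
        have hp0 : (h p : ℝ) ≠ 0 := by exact_mod_cast hppos.ne'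
        rw [hc1]; field_simp

end Prob


/-- First-order probabilities in the random process: with independent uniform coins and a
realizable history `h` (positive values, `h(q_I) = 1`, `h(q') ≤ ρ_h(q')`), for every
admissible `t` (with `0 < t ≤ ρ_h(q)`, and `t = 1` at `q_I`) and every `w ∈ L(q)`,
`Pr[w ∈ Y^r_{h,t}(q)] = t`; moreover for `q ≠ q_I`,
`Pr[w ∈ Z^r_h(q)] = min(h(q₁),...,h(q_k)) = ρ_h(q)`. -/
theorem stmt_3 {σ Ω : Type*} [Fintype σ] [LinearOrder σ] [MeasurableSpace Ω]
    (μ : Measure Ω) [IsProbabilityMeasure μ] (A : UNFA σ)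
    (lvl : σ → ℕ) (hlvl0 : lvl A.qI = 0)
    (hlvlstep : ∀ q' b q, A.trans q' b q → lvl q = lvl q' + 1)
    (U : σ × List Bool × Bool → Ω → ℝ)
    (hUm : ∀ i, Measurable (U i))
    (hUindep : iIndepFun U μ)
    (hUunif : ∀ i c, 0 ≤ c → c ≤ 1 → μ {ω | U i ω ≤ c} = ENNReal.ofReal c)
    (h : σ → ℚ) (hpos : ∀ q', 0 < h q') (hI : h A.qI = 1)
    (hle : ∀ q', q' ≠ A.qI → h q' ≤ A.rhoH h q')
    (q : σ) (t : ℚ) (ht0 : 0 < t) (htle : t ≤ A.rhoH h q) (htI : q = A.qI → t = 1) :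
    (∀ w : List Bool, A.Accepts w q →
        μ {ω | A.memY U h w q t ω} = ENNReal.ofReal (t : ℝ)) ∧
    (q ≠ A.qI → ∀ w : List Bool, A.Accepts w q →
        μ {ω | A.memZ U h w q ω} = ENNReal.ofReal ((A.rhoH h q : ℝ))) := by
  constructor
  · intro w hacc
    exact (keyY A lvl hlvl0 hlvlstep U hUm hUindep hUunif h hpos hI hle w.reverse q t ht0
      (fun _ => htle) htI (by simpa using hacc)).1
  · intro hq w hacc
    have hwne : w ≠ List.nil := fun hw => hq (A.accepts_nil_inv hacc hw)
    obtain ⟨b, rest, hwrev⟩ : ∃ b rest, w.reverse = b :: rest := by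
      cases hw : w.reverse with
      | nil => exact absurd (by simpa using hw) hwne
      | cons b rest => exact ⟨b, rest, rfl⟩
    have hacc' : A.Accepts (b :: rest).reverse q := by
      rw [← hwrev]; simpa using hacc
    have hkey := (keyY A lvl hlvl0 hlvlstep U hUm hUindep hUunif h hpos hI hle (b :: rest) q t
      ht0 (fun _ => htle) htI hacc').2 (by simp)
    show μ {ω | A.memZrev U h w.reverse q ω} = _
    rw [hwrev]
    exact hkey
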